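/- Along trajectories of ė = A_r e + b k_p k̃_xᵀ x + b k_p k̃_r r − b k_p θ̃ᵀ φ and the combined adaptation error dynamics with η = 1: k̃_x' = −x eᵀP b k_p' − k̃_x |k_p| bᵀb, k̃_r' = −r eᵀP b k_p' − k̃_r |k_p| bᵀb, θ̃' = φ eᵀP b k_p' − θ̃ |k_p| bᵀb, the derivative of V = eᵀP e + |k_p|(‖k̃_x‖² + k̃_r² + ‖θ̃‖²) satisfies V̇ ≤ −λ_min(Q)‖e‖² − 2|k_p|² bᵀb (‖k̃_x‖² + k̃_r² + ‖θ̃‖²), where A_rᵀP + P A_r + Q = 0. -/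

import Mathlib

open Matrix

lemma hasDerivAt_dotProduct {n : ℕ} {f g : ℝ → Fin n → ℝ} {f' g' : Fin n → ℝ} {t : ℝ}
    (hf : HasDerivAt f f' t) (hg : HasDerivAt g g' t) :
    HasDerivAt (fun s => f s ⬝ᵥ g s) (f' ⬝ᵥ g t + f t ⬝ᵥ g') t := by
  have h1 := hasDerivAt_pi.mp hf
  have h2 := hasDerivAt_pi.mp hg
  simp only [dotProduct, Finset.sum_add_distrib.symm]
  exact HasDerivAt.fun_sum fun i _ => by
    simpa [mul_comm] using (h1 i).fun_mul (h2 i)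

lemma hasDerivAt_mulVec {n : ℕ} {f : ℝ → Fin n → ℝ} {f' : Fin n → ℝ} {t : ℝ}
    (M : Matrix (Fin n) (Fin n) ℝ) (hf : HasDerivAt f f' t) :
    HasDerivAt (fun s => M *ᵥ f s) (M *ᵥ f') t := by
  rw [hasDerivAt_pi]
  intro i
  have h1 := hasDerivAt_pi.mp hf
  simp only [mulVec, dotProduct]
  exact HasDerivAt.fun_sum fun j _ => (h1 j).const_mul _

lemma sym_dot {n : ℕ} (M : Matrix (Fin n) (Fin n) ℝ) (u w : Fin n → ℝ) :
    u ⬝ᵥ M *ᵥ w = w ⬝ᵥ Mᵀ *ᵥ u := by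
  rw [Matrix.dotProduct_mulVec, ← Matrix.mulVec_transpose, dotProduct_comm]

lemma lam_min_le {n : ℕ} {Q : Matrix (Fin n) (Fin n) ℝ} (hQ : Q.IsHermitian) (v : Fin n → ℝ) :
    (⨅ i, hQ.eigenvalues i) * (v ⬝ᵥ v) ≤ v ⬝ᵥ Q *ᵥ v := by
  classical
  rcases Nat.eq_zero_or_pos n with h | h
  · subst h; simp [dotProduct]
  set U : Matrix (Fin n) (Fin n) ℝ := (hQ.eigenvectorUnitary : Matrix (Fin n) (Fin n) ℝ) with hU
  set y : Fin n → ℝ := Uᵀ *ᵥ v with hy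
  have hUstar : star U = Uᵀ := rfl
  have hQv : v ⬝ᵥ Q *ᵥ v = ∑ i, hQ.eigenvalues i * (y i)^2 := by
    conv_lhs => rw [hQ.spectral_theorem, Unitary.conjStarAlgAut_apply]
    rw [← hU, hUstar, ← mulVec_mulVec, ← mulVec_mulVec, Matrix.dotProduct_mulVec,
      ← Matrix.mulVec_transpose, ← hy]
    simp [dotProduct, mulVec_diagonal, Function.comp, pow_two]
    exact Finset.sum_congr rfl fun i _ => by ring
  have hvv : v ⬝ᵥ v = ∑ i, (y i)^2 := by
    have huu : U * Uᵀ = 1 := by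
      have := (Matrix.mem_unitaryGroup_iff).mp hQ.eigenvectorUnitary.2
      rwa [hUstar] at this
    have : y ⬝ᵥ y = v ⬝ᵥ v := by
      rw [hy, Matrix.mulVec_transpose, ← Matrix.dotProduct_mulVec, ← Matrix.mulVec_transpose,
        mulVec_mulVec, huu, one_mulVec]
    rw [← this]; simp [dotProduct, pow_two]
  rw [hQv, hvv, Finset.mul_sum]
  exact Finset.sum_le_sum fun i _ =>
    mul_le_mul_of_nonneg_right (ciInf_le (Finite.bddBelow_range _) i) (sq_nonneg _)

/-- along the tracking-error dynamics and the combined adaptation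
error dynamics (with `η = 1`), the Lyapunov derivative satisfies
`V̇ ≤ -λ_min(Q)‖e‖² - 2|k_p|² bᵀb (‖k̃_x‖² + k̃_r² + ‖θ̃‖²)`. -/
theorem stmt_9 {n p : ℕ} (Ar P Q : Matrix (Fin n) (Fin n) ℝ)
    (hP : P.PosDef) (hQ : Q.PosDef)
    (hly : Arᵀ * P + P * Ar + Q = 0)
    (b : Fin n → ℝ) (hb : 0 < b ⬝ᵥ b)
    (kp kp' : ℝ) (hkp : kp ≠ 0) (hkp' : kp' = Real.sign kp)
    (e x ktx : ℝ → (Fin n → ℝ)) (ktr r : ℝ → ℝ) (θt φv : ℝ → (Fin p → ℝ))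
    (t : ℝ)
    (he : HasDerivAt e (Ar *ᵥ e t + (kp * (ktx t ⬝ᵥ x t)) • b
        + (kp * ktr t * r t) • b - (kp * (θt t ⬝ᵥ φv t)) • b) t)
    (hktx : HasDerivAt ktx
      (-(((e t ⬝ᵥ P *ᵥ b) * kp') • x t) - (|kp| * (b ⬝ᵥ b)) • ktx t) t)
    (hktr : HasDerivAt ktr
      (-(r t * (e t ⬝ᵥ P *ᵥ b) * kp') - |kp| * (b ⬝ᵥ b) * ktr t) t)
    (hθt : HasDerivAt θt
      (((e t ⬝ᵥ P *ᵥ b) * kp') • φv t - (|kp| * (b ⬝ᵥ b)) • θt t) t) :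
    deriv (fun s => e s ⬝ᵥ P *ᵥ e s
        + |kp| * (ktx s ⬝ᵥ ktx s + (ktr s) ^ 2 + θt s ⬝ᵥ θt s)) t ≤
      -(⨅ i, hQ.1.eigenvalues i) * (e t ⬝ᵥ e t)
        - 2 * |kp| ^ 2 * (b ⬝ᵥ b) *
          (ktx t ⬝ᵥ ktx t + (ktr t) ^ 2 + θt t ⬝ᵥ θt t) := by
  have hPsym : Pᵀ = P := by simpa using hP.1.eq
  set e' : Fin n → ℝ := Ar *ᵥ e t + (kp * (ktx t ⬝ᵥ x t)) • b
      + (kp * ktr t * r t) • b - (kp * (θt t ⬝ᵥ φv t)) • b with he'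
  set kx' : Fin n → ℝ := -(((e t ⬝ᵥ P *ᵥ b) * kp') • x t) - (|kp| * (b ⬝ᵥ b)) • ktx t with hkx'
  set kr' : ℝ := -(r t * (e t ⬝ᵥ P *ᵥ b) * kp') - |kp| * (b ⬝ᵥ b) * ktr t with hkr'
  set th' : Fin p → ℝ := ((e t ⬝ᵥ P *ᵥ b) * kp') • φv t - (|kp| * (b ⬝ᵥ b)) • θt t with hth'
  have d1 : HasDerivAt (fun s => e s ⬝ᵥ P *ᵥ e s)
      (e' ⬝ᵥ P *ᵥ e t + e t ⬝ᵥ P *ᵥ e') t :=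
    hasDerivAt_dotProduct he (hasDerivAt_mulVec P he)
  have d2 : HasDerivAt (fun s => ktx s ⬝ᵥ ktx s) (kx' ⬝ᵥ ktx t + ktx t ⬝ᵥ kx') t :=
    hasDerivAt_dotProduct hktx hktx
  have d3 : HasDerivAt (fun s => (ktr s) ^ 2) (2 * ktr t * kr') t := by
    have := hktr.fun_pow 2
    simpa [mul_comm, mul_assoc] using this
  have d4 : HasDerivAt (fun s => θt s ⬝ᵥ θt s) (th' ⬝ᵥ θt t + θt t ⬝ᵥ th') t :=
    hasDerivAt_dotProduct hθt hθt
  have total : HasDerivAt (fun s => e s ⬝ᵥ P *ᵥ e s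
      + |kp| * (ktx s ⬝ᵥ ktx s + (ktr s) ^ 2 + θt s ⬝ᵥ θt s))
      (e' ⬝ᵥ P *ᵥ e t + e t ⬝ᵥ P *ᵥ e'
        + |kp| * ((kx' ⬝ᵥ ktx t + ktx t ⬝ᵥ kx') + 2 * ktr t * kr'
          + (th' ⬝ᵥ θt t + θt t ⬝ᵥ th'))) t :=
    d1.add (((d2.add d3).add d4).const_mul |kp|)
  rw [total.deriv]
  -- key algebraic facts
  have hswap : e' ⬝ᵥ P *ᵥ e t = e t ⬝ᵥ P *ᵥ e' := by rw [sym_dot, hPsym]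
  have hsum : Arᵀ * P + P * Ar = -Q := by
    have := hly
    linear_combination (norm := abel) this
  have key : 2 * (e t ⬝ᵥ (P * Ar) *ᵥ e t) = -(e t ⬝ᵥ Q *ᵥ e t) := by
    have h1 : e t ⬝ᵥ (Arᵀ * P) *ᵥ e t = e t ⬝ᵥ (P * Ar) *ᵥ e t := by
      rw [sym_dot]
      congr 1
      rw [Matrix.transpose_mul, Matrix.transpose_transpose, hPsym]
    have h2 : e t ⬝ᵥ (Arᵀ * P + P * Ar) *ᵥ e t = -(e t ⬝ᵥ Q *ᵥ e t) := by
      rw [hsum, Matrix.neg_mulVec, dotProduct_neg]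
    rw [Matrix.add_mulVec, dotProduct_add, h1] at h2
    linarith
  have hk : |kp| * kp' = kp := by
    rw [hkp']
    rcases lt_or_gt_of_ne hkp with h | h
    · rw [Real.sign_of_neg h, abs_of_neg h]; ring
    · rw [Real.sign_of_pos h, abs_of_pos h]; ring
  have hk2 : |kp| * |kp| = |kp| ^ 2 := by ring
  rw [hswap, he', hkx', hkr', hth']
  simp only [mulVec_add, mulVec_sub, mulVec_smul, mulVec_neg, mulVec_mulVec,
    dotProduct_add, dotProduct_sub, dotProduct_smul, dotProduct_neg,
    add_dotProduct, sub_dotProduct, smul_dotProduct, neg_dotProduct, smul_eq_mul]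
  rw [dotProduct_comm (x t) (ktx t), dotProduct_comm (φv t) (θt t)]
  have hlam := lam_min_le hQ.1 (e t)
  have h1 : |kp| * ((e t ⬝ᵥ P *ᵥ b) * kp' * (ktx t ⬝ᵥ x t))
      = kp * ((ktx t ⬝ᵥ x t) * (e t ⬝ᵥ P *ᵥ b)) := by
    linear_combination ((e t ⬝ᵥ P *ᵥ b) * (ktx t ⬝ᵥ x t)) * hk
  have h2 : |kp| * (r t * (e t ⬝ᵥ P *ᵥ b) * kp' * ktr t)
      = kp * (ktr t * r t * (e t ⬝ᵥ P *ᵥ b)) := by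
    linear_combination (r t * (e t ⬝ᵥ P *ᵥ b) * ktr t) * hk
  have h3 : |kp| * ((e t ⬝ᵥ P *ᵥ b) * kp' * (θt t ⬝ᵥ φv t))
      = kp * ((θt t ⬝ᵥ φv t) * (e t ⬝ᵥ P *ᵥ b)) := by
    linear_combination ((e t ⬝ᵥ P *ᵥ b) * (θt t ⬝ᵥ φv t)) * hk
  nlinarith [key, hlam, h1, h2, h3]
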